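/- The homomorphic rewrite relation on the message algebra is strongly normalizing: there is no infinite sequence of messages m₀ → m₁ → m₂ → ⋯ where each step is a homomorphic rewrite; equivalently, the converse of the one-step rewrite relation is well-founded. -/
import Mathlib


/-- Messages: the free term algebra generated by atoms under pairing and
encryption with atomic keys. -/
inductive Msg (A : Type) : Type
  | atom : A → Msg A
  | pair : Msg A → Msg A → Msg A
  | enc : Msg A → A → Msg A

/-- The homomorphic rewrite relation: smallest relation containing every
instance of `{m·m'}_k → {m}_k·{m'}_k` and closed under contexts. -/
inductive Rw {A : Type} : Msg A → Msg A → Prop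
  | homo (m m' : Msg A) (k : A) :
      Rw (.enc (.pair m m') k) (.pair (.enc m k) (.enc m' k))
  | pairL {m m' : Msg A} (n : Msg A) : Rw m m' → Rw (.pair m n) (.pair m' n)
  | pairR {m m' : Msg A} (n : Msg A) : Rw m m' → Rw (.pair n m) (.pair n m')
  | enc {m m' : Msg A} (k : A) : Rw m m' → Rw (.enc m k) (.enc m' k)


def Msg.wt {A : Type} : Msg A → ℕ
  | .atom _ => 1
  | .pair m n => m.wt + n.wt + 1
  | .enc m _ => 2 * m.wt

theorem Rw.wt_lt {A : Type} {m m' : Msg A} (h : Rw m m') : m'.wt < m.wt := by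
  induction h with
  | homo m m' k => simp [Msg.wt]; omega
  | pairL n _ ih => simp [Msg.wt]; omega
  | pairR n _ ih => simp [Msg.wt]; omega
  | enc k _ ih => simp [Msg.wt]; omega

/-- The homomorphic rewrite relation is strongly normalizing:
the converse of the one-step rewrite relation is well-founded. -/
theorem homomorphic_rewrite_strongly_normalizing
    (A : Type) [Countable A] :
    WellFounded (fun m m' : Msg A => Rw m' m) := by
  exact Subrelation.wf (fun h => h.wt_lt) (InvImage.wf Msg.wt Nat.lt_wfRel.wf)
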